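/- Let f, g : ℂ → ℂ be transcendental entire functions, let ϑ : ℂ → ℂ be a homeomorphism of the plane, and let U ⊆ ℂ be a set such that ϑ(f(z)) = g(ϑ(z)) for all z ∈ U. If I(f) ⊆ U and I(g) ⊆ ϑ(U), then ϑ(I(f)) = I(g). -/

import Mathlib

/-- A function `f : ℂ → ℂ` is transcendental entire if it is holomorphic on all of `ℂ`
and is not a polynomial. -/
def TranscendentalEntire (f : ℂ → ℂ) : Prop :=
  Differentiable ℂ f ∧ ¬ ∃ p : Polynomial ℂ, ∀ z, f z = p.eval z

/-- The escaping set `I(f) = { z : |f^n(z)| → ∞ }`. -/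
def escapingSet (f : ℂ → ℂ) : Set ℂ :=
  {z | Filter.Tendsto (fun n : ℕ => ‖f^[n] z‖) Filter.atTop Filter.atTop}

open Filter

lemma abs_tendsto_iff_cocompact {a : ℕ → ℂ} :
    Tendsto (fun n => ‖a n‖) atTop atTop ↔ Tendsto a atTop (cocompact ℂ) := by
  rw [← Metric.cobounded_eq_cocompact, ← tendsto_norm_atTop_iff_cobounded]

lemma homeo_abs_tendsto (ϑ : ℂ ≃ₜ ℂ) {a : ℕ → ℂ}
    (ha : Tendsto (fun n => ‖a n‖) atTop atTop) :
    Tendsto (fun n => ‖ϑ (a n)‖) atTop atTop := by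
  rw [abs_tendsto_iff_cocompact] at ha ⊢
  have hm : Tendsto (⇑ϑ) (cocompact ℂ) (cocompact ℂ) := ϑ.map_cocompact.le
  exact hm.comp ha

/-- membership in escaping set of iterates -/
lemma escaping_iterate {f : ℂ → ℂ} {z : ℂ} (hz : z ∈ escapingSet f) (k : ℕ) :
    f^[k] z ∈ escapingSet f := by
  have h : Tendsto (fun n : ℕ => ‖f^[n + k] z‖) atTop atTop :=
    hz.comp (tendsto_add_atTop_nat k)
  simpa [Function.iterate_add_apply, escapingSet] using h

theorem image_escapingSet_eq_of_conj
    (f g : ℂ → ℂ) (hf : TranscendentalEntire f) (hg : TranscendentalEntire g)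
    (ϑ : ℂ ≃ₜ ℂ) (U : Set ℂ)
    (hconj : ∀ z ∈ U, ϑ (f z) = g (ϑ z))
    (hIf : escapingSet f ⊆ U) (hIg : escapingSet g ⊆ ϑ '' U) :
    ϑ '' escapingSet f = escapingSet g := by
  apply Set.Subset.antisymm
  · rintro _ ⟨z, hz, rfl⟩
    have hiter : ∀ n : ℕ, ϑ (f^[n] z) = g^[n] (ϑ z) := by
      intro n
      induction n with
      | zero => simp
      | succ n ih =>
        rw [Function.iterate_succ_apply', Function.iterate_succ_apply',
          hconj _ (hIf (escaping_iterate hz n)), ih]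
    have h := homeo_abs_tendsto ϑ hz
    simpa [escapingSet, hiter] using h
  · intro w hw
    obtain ⟨u, hu, rfl⟩ := hIg hw
    refine ⟨u, ?_, rfl⟩
    have hiter : ∀ n : ℕ, f^[n] u ∈ U ∧ ϑ (f^[n] u) = g^[n] (ϑ u) := by
      intro n
      induction n with
      | zero => exact ⟨hu, rfl⟩
      | succ n ih =>
        have h2 : ϑ (f^[n+1] u) = g^[n+1] (ϑ u) := by
          rw [Function.iterate_succ_apply', Function.iterate_succ_apply',
            hconj _ ih.1, ih.2]
        refine ⟨?_, h2⟩
        have hmem : g^[n+1] (ϑ u) ∈ escapingSet g := escaping_iterate hw (n + 1)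
        obtain ⟨v, hv, hveq⟩ := hIg hmem
        have hfv : f^[n+1] u = v := ϑ.injective (by rw [h2, hveq])
        rwa [hfv]
    have h := homeo_abs_tendsto ϑ.symm hw
    have heq : ∀ n : ℕ, ϑ.symm (g^[n] (ϑ u)) = f^[n] u := fun n => by
      rw [← (hiter n).2, Homeomorph.symm_apply_apply]
    simpa [escapingSet, heq] using h
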